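/- Let K_{l_1*t_1,...,l_s*t_s} be a complete multipartite graph, fix i with l_i ≥ 2, and let X be a set of vertices consisting of p vertices of some part U_{i,j} (1 ≤ p ≤ t_i) together with q vertices of another part U_{i,k} (k ≠ j, 0 ≤ q < p). Then −t_i is a main eigenvalue of the adjacency matrix of the signed graph obtained from K_{l_1*t_1,...,l_s*t_s} by switching about X. -/

import Mathlib

open Matrix

/-- The signed adjacency matrix obtained from the matrix `A` by switching about the
vertex set `X`: entry `(i,j)` is multiplied by `-1` exactly when one of `i, j` lies in `X`. -/
def switchMatrix {m : Type*} [DecidableEq m] (X : Finset m) (A : Matrix m m ℝ) :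
    Matrix m m ℝ :=
  fun i j => (if i ∈ X then (-1 : ℝ) else 1) * A i j * (if j ∈ X then (-1 : ℝ) else 1)

/-- Index set for the parts of `K_{l_1*t_1, …, l_s*t_s}`: the part `U_{i,j}` corresponds
to the pair `⟨i, j⟩`. -/
abbrev PartIdx {s : ℕ} (l : Fin s → ℕ) := (i : Fin s) × Fin (l i)

/-- Vertex type of `K_{l_1*t_1, …, l_s*t_s}`: a vertex is a part together with a position
in that part (the part `⟨i, j⟩` has size `t i`). -/
abbrev MV {s : ℕ} (l t : Fin s → ℕ) := (p : PartIdx l) × Fin (t p.1)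

/-- The complete multipartite graph `K_{l_1*t_1, …, l_s*t_s}` having, for each `i`,
exactly `l i` parts of size `t i`. -/
def cmGraph {s : ℕ} (l t : Fin s → ℕ) : SimpleGraph (MV l t) :=
  SimpleGraph.completeMultipartiteGraph (fun p : PartIdx l => Fin (t p.1))

instance cmDecidable {s : ℕ} (l t : Fin s → ℕ) : DecidableRel (cmGraph l t).Adj :=
  fun a b => inferInstanceAs (Decidable (a.1 ≠ b.1))

lemma sum_fiber {s : ℕ} (l t : Fin s → ℕ) (g : PartIdx l → ℝ) :
    ∑ u : MV l t, g u.1 = ∑ a : PartIdx l, (t a.1 : ℝ) * g a := by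
  rw [← Finset.univ_sigma_univ, Finset.sum_sigma]
  simp [Finset.sum_const, mul_comm]

/-- In `K_{l_1*t_1, …, l_s*t_s}` with `l i ≥ 2`, switch about a set `X`
consisting of `p` vertices of a part `U_{i,j}` (`1 ≤ p ≤ t i`) together with `q` vertices
of another part `U_{i,k}` (`k ≠ j`, `0 ≤ q < p`).  Then `-t i` is a main eigenvalue of the
adjacency matrix of the resulting signed graph. -/
theorem stmt8 {s : ℕ} (l t : Fin s → ℕ)
    (hanti : ∀ i j : Fin s, i < j → t j < t i) (ht : ∀ i, 1 ≤ t i) (hl : ∀ i, 1 ≤ l i)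
    (i : Fin s) (hli : 2 ≤ l i) (j k : Fin (l i)) (hjk : j ≠ k)
    (p q : ℕ) (hp1 : 1 ≤ p) (hp2 : p ≤ t i) (hq : q < p)
    (X : Finset (MV l t))
    (hXsub : ∀ v ∈ X, v.1 = ⟨i, j⟩ ∨ v.1 = ⟨i, k⟩)
    (hXp : (X.filter (fun v => v.1 = ⟨i, j⟩)).card = p)
    (hXq : (X.filter (fun v => v.1 = ⟨i, k⟩)).card = q) :
    ∃ v : MV l t → ℝ, v ≠ 0 ∧
      (switchMatrix X ((cmGraph l t).adjMatrix ℝ)).mulVec v = (-(t i : ℝ)) • v ∧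
      ∑ u, v u ≠ 0 := by
  classical
  set c₁ : PartIdx l := ⟨i, j⟩ with hc₁
  set c₂ : PartIdx l := ⟨i, k⟩ with hc₂
  have hc : c₁ ≠ c₂ := by
    intro h
    rw [hc₁, hc₂, Sigma.mk.inj_iff] at h
    exact hjk (eq_of_heq h.2)
  set F : PartIdx l → ℝ := fun a => (if a = c₁ then (1:ℝ) else 0) - (if a = c₂ then 1 else 0)
    with hF
  set d : MV l t → ℝ := fun u => if u ∈ X then (-1:ℝ) else 1 with hd
  -- sum of F over all vertices is 0
  have hsumF : ∑ u : MV l t, F u.1 = 0 := by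
    rw [sum_fiber]
    simp only [hF, mul_sub, mul_ite, mul_one, mul_zero]
    rw [Finset.sum_sub_distrib]
    simp [hc₁, hc₂]
  refine ⟨fun u => d u * F u.1, ?_, ?_, ?_⟩
  · intro h
    have h0 := congrFun h ⟨c₁, ⟨0, ht i⟩⟩
    simp only [hd, hF, Pi.zero_apply] at h0
    split_ifs at h0 <;> simp_all
  · funext u
    have key : ∀ w : MV l t,
        switchMatrix X ((cmGraph l t).adjMatrix ℝ) u w * (d w * F w.1)
          = d u * (F w.1 - (if w.1 = u.1 then F w.1 else 0)) := by
      intro w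
      simp only [switchMatrix, SimpleGraph.adjMatrix_apply, hd]
      simp only [cmGraph,
        SimpleGraph.comap_adj, SimpleGraph.top_adj]
      by_cases hw : w ∈ X <;> by_cases hu : u ∈ X <;>
        by_cases h : w.1 = u.1 <;> simp [hw, hu, h, Ne.symm] <;> ring
    rw [Matrix.mulVec, Pi.smul_apply]
    show ∑ w, switchMatrix X ((cmGraph l t).adjMatrix ℝ) u w * (d w * F w.1) = _
    rw [Finset.sum_congr rfl (fun w _ => key w), ← Finset.mul_sum,
      Finset.sum_sub_distrib, hsumF]
    have : ∑ w : MV l t, (if w.1 = u.1 then F w.1 else 0)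
        = (t u.1.1 : ℝ) * F u.1 := by
      rw [sum_fiber l t (fun a => if a = u.1 then F a else 0)]
      simp [mul_ite]
    rw [this]
    have ht' : (t u.1.1 : ℝ) * F u.1 = (t i : ℝ) * F u.1 := by
      by_cases h1 : u.1 = c₁
      · rw [h1]
      · by_cases h2 : u.1 = c₂
        · rw [h2]
        · simp [hF, h1, h2]
    rw [ht']
    simp only [smul_eq_mul, hF]
    ring
  · have hsplit : ∀ u : MV l t, d u * F u.1
        = F u.1 - 2 * (if u ∈ X then F u.1 else 0) := by
      intro u
      by_cases hu : u ∈ X <;> simp [hd, hu] <;> ring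
    rw [Finset.sum_congr rfl (fun u _ => hsplit u), Finset.sum_sub_distrib, hsumF,
      ← Finset.mul_sum]
    have : ∑ u : MV l t, (if u ∈ X then F u.1 else 0) = ∑ u ∈ X, F u.1 := by
      rw [Finset.sum_ite_mem]; simp
    rw [this]
    have : ∑ u ∈ X, F u.1 = (p : ℝ) - (q : ℝ) := by
      simp only [hF]
      rw [Finset.sum_sub_distrib]
      rw [Finset.sum_boole, Finset.sum_boole, hXp, hXq]
    rw [this]
    intro h
    have : (p : ℝ) = (q : ℝ) := by linarith
    exact absurd (Nat.cast_injective this) (by omega)
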